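/- Let φ, ψ be flows and suppose φ is (h,τ)-related to ψ. Then for every periodic point x of φ, the minimal ψ-period of h(x) equals τ(T, x) where T is the minimal φ-period of x. -/
import Mathlib


/-- If the flow `φ` is `(h,τ)`-related to `ψ` (with `τ(·,x)` a strictly
increasing continuous bijection of `ℝ` fixing `0`), then for every periodic point `x`
of `φ`, the minimal `ψ`-period of `h x` equals `τ(T, x)` where `T` is the minimal
`φ`-period of `x` (minimal periods taken as `sInf {t > 0 | the point is t-periodic}`,
which is `0` for fixed points). -/
theorem stmt6 {X Y : Type*}
    [NormedAddCommGroup X] [NormedSpace ℝ X] [FiniteDimensional ℝ X]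
    [NormedAddCommGroup Y] [NormedSpace ℝ Y] [FiniteDimensional ℝ Y]
    (φ : ℝ → X → X) (ψ : ℝ → Y → Y)
    (hφcont : Continuous fun p : ℝ × X => φ p.1 p.2)
    (hφ0 : ∀ x, φ 0 x = x) (hφgrp : ∀ t s x, φ t (φ s x) = φ (t + s) x)
    (hψcont : Continuous fun p : ℝ × Y => ψ p.1 p.2)
    (hψ0 : ∀ y, ψ 0 y = y) (hψgrp : ∀ t s y, ψ t (ψ s y) = ψ (t + s) y)
    (h : X ≃ₜ Y) (τ : ℝ → X → ℝ)
    (hτmono : ∀ x, StrictMono fun t => τ t x)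
    (hτcont : ∀ x, Continuous fun t => τ t x)
    (hτsurj : ∀ x, Function.Surjective fun t => τ t x)
    (hτ0 : ∀ x, τ 0 x = 0)
    (hrel : ∀ t x, h (φ t x) = ψ (τ t x) (h x))
    (x : X) (hx : ∃ T : ℝ, 0 < T ∧ φ T x = x) :
    sInf {s : ℝ | 0 < s ∧ ψ s (h x) = h x} =
      τ (sInf {t : ℝ | 0 < t ∧ φ t x = x}) x := by
  set S : Set ℝ := {t : ℝ | 0 < t ∧ φ t x = x} with hS
  have hset : {s : ℝ | 0 < s ∧ ψ s (h x) = h x} = (fun t => τ t x) '' S := by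
    ext s
    constructor
    · rintro ⟨hs, hper⟩
      obtain ⟨t, ht⟩ := hτsurj x s
      
      refine ⟨t, ⟨?_, ?_⟩, ht⟩
      · have := (hτmono x).lt_iff_lt (a := 0) (b := t)
        simp only [hτ0] at this
        exact this.mp (by simpa [ht] using hs)
      · have : h (φ t x) = h x := by rw [hrel]; rw [show τ t x = s from ht]; exact hper
        exact h.injective this
    · rintro ⟨t, ⟨ht, hper⟩, rfl⟩
      refine ⟨?_, ?_⟩
      · have := (hτmono x).lt_iff_lt (a := 0) (b := t)
        simp only [hτ0] at this
        exact this.mpr ht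
      · rw [← hrel, hper]
  rw [hset]
  have hne : S.Nonempty := by obtain ⟨T, hT, hTper⟩ := hx; exact ⟨T, hT, hTper⟩
  have hbdd : BddBelow S := ⟨0, fun t ht => le_of_lt ht.1⟩
  exact ((hτmono x).monotone.map_csInf_of_continuousAt
    ((hτcont x).continuousAt) hne hbdd).symm
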